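/- Let Λ = (Λ_{ij}) be an n×n symmetric positive definite matrix with eigenvalue-based elementary symmetric curvature functions, and let κ' denote the eigenvalues of the (n-1)×(n-1) upper-left block (Λ_{αβ}), 1 ≤ α,β ≤ n-1. Define A_{m} = σ_{m}(κ') and B_m = σ_m(κ') - Σ_{γ=1}^{n-1} σ_{m-2}(κ'|γ) Λ_{γn}^2. If A_{n-k-1}Λ_{nn} + B_{n-k} > 0, then σ_{n-1}(κ')/σ_{n-k-1}(κ') ≥ (A_{n-1}Λ_{nn} + B_n)/(A_{n-k-1}Λ_{nn} + B_{n-k}). -/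
import Mathlib


/-- The `j`-th elementary symmetric polynomial of `f` over the finite index set `s`. -/
noncomputable def esymm {ι : Type*} [DecidableEq ι] (s : Finset ι) (f : ι → ℝ) (j : ℕ) : ℝ :=
  ∑ t ∈ s.powersetCard j, ∏ i ∈ t, f i

/-- Integer-indexed elementary symmetric polynomial, with `σ_j = 0` for `j < 0`. -/
noncomputable def esymmZ {ι : Type*} [DecidableEq ι] (s : Finset ι) (f : ι → ℝ) (j : ℤ) : ℝ :=
  if j < 0 then 0 else esymm s f j.toNat

/-- `A_m = σ_m(κ')`. -/
noncomputable def Afun {p : ℕ} (κ : Fin p → ℝ) (m : ℕ) : ℝ :=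
  esymm Finset.univ κ m

/-- `B_m = σ_m(κ') - Σ_γ σ_{m-2}(κ'|γ) Λ_{γn}²`. -/
noncomputable def Bfun {p : ℕ} (κ : Fin p → ℝ) (Λn : Fin p → ℝ) (m : ℕ) : ℝ :=
  esymm Finset.univ κ m -
    ∑ γ : Fin p, esymmZ (Finset.univ.erase γ) κ ((m : ℤ) - 2) * (Λn γ) ^ 2

lemma esymm_nonneg {ι : Type*} [DecidableEq ι] (s : Finset ι) (f : ι → ℝ) (j : ℕ)
    (h : ∀ i ∈ s, 0 ≤ f i) : 0 ≤ esymm s f j := by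
  apply Finset.sum_nonneg
  intro t ht
  exact Finset.prod_nonneg fun i hi => h i ((Finset.mem_powersetCard.mp ht).1 hi)

lemma esymm_pos {ι : Type*} [DecidableEq ι] (s : Finset ι) (f : ι → ℝ) (j : ℕ)
    (hj : j ≤ s.card) (h : ∀ i ∈ s, 0 < f i) : 0 < esymm s f j := by
  apply Finset.sum_pos
  · intro t ht
    exact Finset.prod_pos fun i hi => h i ((Finset.mem_powersetCard.mp ht).1 hi)
  · exact Finset.powersetCard_nonempty.2 hj

lemma esymm_zero_of_lt {ι : Type*} [DecidableEq ι] (s : Finset ι) (f : ι → ℝ) (j : ℕ)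
    (hj : s.card < j) : esymm s f j = 0 := by
  unfold esymm
  rw [Finset.powersetCard_eq_empty.2 hj, Finset.sum_empty]

lemma esymm_card {ι : Type*} [DecidableEq ι] (s : Finset ι) (f : ι → ℝ) :
    esymm s f s.card = ∏ i ∈ s, f i := by
  unfold esymm
  rw [Finset.powersetCard_self, Finset.sum_singleton]

lemma esymm_insert {ι : Type*} [DecidableEq ι] {a : ι} {s : Finset ι} (ha : a ∉ s)
    (f : ι → ℝ) (j : ℕ) :
    esymm (insert a s) f (j+1) = esymm s f (j+1) + f a * esymm s f j := by
  unfold esymm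
  rw [Finset.powersetCard_succ_insert ha, Finset.sum_union, Finset.sum_image]
  · congr 1
    rw [Finset.mul_sum]
    refine Finset.sum_congr rfl fun t ht => ?_
    rw [Finset.prod_insert fun hat => ha ((Finset.mem_powersetCard.mp ht).1 hat)]
  · intro t ht u hu h
    have hat : a ∉ t := fun hat => ha ((Finset.mem_powersetCard.mp ht).1 hat)
    have hau : a ∉ u := fun hau => ha ((Finset.mem_powersetCard.mp hu).1 hau)
    rw [← Finset.erase_insert hat, ← Finset.erase_insert hau, h]
  · rw [Finset.disjoint_left]
    intro t ht ht'
    obtain ⟨u, hu, rfl⟩ := Finset.mem_image.mp ht'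
    exact ha ((Finset.mem_powersetCard.mp ht).1 (Finset.mem_insert_self a u))

lemma esymmZ_eq {ι : Type*} [DecidableEq ι] (s : Finset ι) (f : ι → ℝ) (j : ℕ) (m : ℤ)
    (h : m = (j : ℤ)) : esymmZ s f m = esymm s f j := by
  subst h; simp [esymmZ]

lemma esymm_key {p : ℕ} (κ : Fin p → ℝ) (hκ : ∀ i, 0 ≤ κ i) (j : ℕ) (γ : Fin p) :
    esymm Finset.univ κ p * esymm (Finset.univ.erase γ) κ j
      ≤ esymm Finset.univ κ (j+1) * ∏ i ∈ Finset.univ.erase γ, κ i := by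
  have hins : (Finset.univ : Finset (Fin p)) = insert γ (Finset.univ.erase γ) :=
    (Finset.insert_erase (Finset.mem_univ γ)).symm
  have hcard : (Finset.univ : Finset (Fin p)).card = p := by simp
  have h1 : esymm Finset.univ κ (j+1)
      = esymm (Finset.univ.erase γ) κ (j+1) + κ γ * esymm (Finset.univ.erase γ) κ j := by
    conv_lhs => rw [hins]
    exact esymm_insert (Finset.notMem_erase γ _) κ j
  have h2 : esymm Finset.univ κ p = κ γ * ∏ i ∈ Finset.univ.erase γ, κ i := by
    have := esymm_card (Finset.univ : Finset (Fin p)) κ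
    rw [hcard] at this
    rw [this, Finset.mul_prod_erase _ _ (Finset.mem_univ γ)]
  have h3 : 0 ≤ esymm (Finset.univ.erase γ) κ (j+1) :=
    esymm_nonneg _ _ _ fun i _ => hκ i
  have h4 : 0 ≤ ∏ i ∈ Finset.univ.erase γ, κ i :=
    Finset.prod_nonneg fun i _ => hκ i
  rw [h1, h2]
  nlinarith

/-- If `Λ` is a symmetric positive definite matrix whose upper-left `(n-1)×(n-1)` block is
`diag(κ')` with `κ' > 0`, last diagonal entry `Λ_{nn}` and off-diagonal column `Λ_{γn}`, and if
`A_{n-k-1}Λ_{nn} + B_{n-k} > 0`, then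
`σ_{n-1}(κ')/σ_{n-k-1}(κ') ≥ (A_{n-1}Λ_{nn} + B_n)/(A_{n-k-1}Λ_{nn} + B_{n-k})`. -/
theorem stmt1 (n k : ℕ) (hn : 2 ≤ n) (hk : 1 ≤ k) (hk' : k ≤ n - 2)
    (κ : Fin (n - 1) → ℝ) (hκ : ∀ i, 0 < κ i) (Λnn : ℝ) (Λn : Fin (n - 1) → ℝ)
    (hPD : (Matrix.fromBlocks (Matrix.diagonal κ) (Matrix.of fun i (_ : Unit) => Λn i)
      (Matrix.of fun (_ : Unit) j => Λn j) (Matrix.of fun (_ : Unit) (_ : Unit) => Λnn)).PosDef)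
    (hden : 0 < Afun κ (n - k - 1) * Λnn + Bfun κ Λn (n - k)) :
    Afun κ (n - 1) / Afun κ (n - k - 1)
      ≥ (Afun κ (n - 1) * Λnn + Bfun κ Λn n)
        / (Afun κ (n - k - 1) * Λnn + Bfun κ Λn (n - k)) := by
  have hcard : (Finset.univ : Finset (Fin (n - 1))).card = n - 1 := by simp
  have hcard' : ∀ γ : Fin (n - 1), ((Finset.univ : Finset (Fin (n - 1))).erase γ).card = n - 2 := by
    intro γ
    rw [Finset.card_erase_of_mem (Finset.mem_univ γ), hcard]; omega
  set j : ℕ := n - k - 2 with hj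
  have hjk : n - k - 1 = j + 1 := by omega
  have hjk2 : n - k = j + 2 := by omega
  -- rewrite Bfun n
  have hBn : Bfun κ Λn n = 0 - ∑ γ : Fin (n - 1),
      (∏ i ∈ Finset.univ.erase γ, κ i) * Λn γ ^ 2 := by
    unfold Bfun
    rw [esymm_zero_of_lt _ _ _ (by omega)]
    congr 1
    refine Finset.sum_congr rfl fun γ _ => ?_
    rw [esymmZ_eq _ _ (n - 2) _ (by omega)]
    congr 1
    have := esymm_card ((Finset.univ : Finset (Fin (n - 1))).erase γ) κ
    rw [hcard' γ] at this
    exact this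
  have hBnk : Bfun κ Λn (n - k) = esymm Finset.univ κ (j + 2) - ∑ γ : Fin (n - 1),
      esymm (Finset.univ.erase γ) κ j * Λn γ ^ 2 := by
    unfold Bfun
    rw [hjk2]
    congr 1
    refine Finset.sum_congr rfl fun γ _ => ?_
    rw [esymmZ_eq _ _ j _ (by push_cast; ring)]
  have hκ' : ∀ i ∈ (Finset.univ : Finset (Fin (n - 1))), 0 < κ i := fun i _ => hκ i
  have hA'pos : 0 < Afun κ (n - k - 1) :=
    esymm_pos _ _ _ (by rw [hcard]; omega) hκ'
  have hApos : 0 < Afun κ (n - 1) := esymm_pos _ _ _ (by rw [hcard]) hκ'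
  have hσ2 : 0 ≤ esymm (Finset.univ : Finset (Fin (n - 1))) κ (j + 2) :=
    esymm_nonneg _ _ _ fun i _ => (hκ i).le
  have hsum : Afun κ (n - 1) * (∑ γ : Fin (n - 1), esymm (Finset.univ.erase γ) κ j * Λn γ ^ 2)
      ≤ Afun κ (n - k - 1) * (∑ γ : Fin (n - 1), (∏ i ∈ Finset.univ.erase γ, κ i) * Λn γ ^ 2) := by
    rw [Finset.mul_sum, Finset.mul_sum]
    refine Finset.sum_le_sum fun γ _ => ?_
    rw [← mul_assoc, ← mul_assoc]
    refine mul_le_mul_of_nonneg_right ?_ (sq_nonneg _)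
    have := esymm_key κ (fun i => (hκ i).le) j γ
    show esymm Finset.univ κ (n - 1) * _ ≤ esymm Finset.univ κ (n - k - 1) * _
    rw [hjk]
    exact this
  rw [ge_iff_le, div_le_div_iff₀ hden hA'pos]
  rw [hBn, hBnk]
  have hA0 : (0:ℝ) ≤ Afun κ (n - 1) := hApos.le
  show _ ≤ Afun κ (n - 1) * (Afun κ (n - k - 1) * Λnn + (esymm Finset.univ κ (j + 2) - _))
  nlinarith [hsum, mul_nonneg hA0 hσ2]
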